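/- The X-ray transform on the torus is injective on continuous functions: if f : 𝕋^n → ℂ is continuous (n ≥ 2) and ∫₀¹ f(x + tv) dt = 0 for every x ∈ 𝕋^n and every nonzero v ∈ ℤ^n, then f = 0. -/

import Mathlib

open MeasureTheory Real

namespace XrayAux

noncomputable section

/-- The character on the torus associated to a frequency vector `k`. -/
def chi {n : ℕ} (k : Fin n → ℤ) : C(Fin n → AddCircle (1:ℝ), ℂ) :=
  ⟨fun x => ∏ i, fourier (k i) (x i), by
    refine continuous_finset_prod _ fun i _ => ?_
    exact (ContinuousMap.continuous _).comp (continuous_apply i)⟩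

lemma chi_apply {n : ℕ} (k : Fin n → ℤ) (x : Fin n → AddCircle (1:ℝ)) :
    chi k x = ∏ i, fourier (k i) (x i) := rfl

lemma fourier_add_x {T : ℝ} [Fact (0 < T)] (m : ℤ) (x y : AddCircle T) :
    fourier m (x + y) = fourier m x * fourier m y := by
  simp [fourier_apply, smul_add, AddCircle.toCircle_add]

lemma chi_mul {n : ℕ} (k l : Fin n → ℤ) : chi k * chi l = chi (k + l) := by
  ext x
  simp only [ContinuousMap.mul_apply, chi_apply, ← Finset.prod_mul_distrib]
  refine Finset.prod_congr rfl fun i _ => ?_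
  rw [Pi.add_apply, fourier_add]

lemma chi_zero {n : ℕ} : chi (0 : Fin n → ℤ) = 1 := by
  ext x
  simp [chi_apply]

lemma chi_star {n : ℕ} (k : Fin n → ℤ) : star (chi k) = chi (-k) := by
  ext x
  simp [chi_apply, ← fourier_neg]

lemma chi_add_x {n : ℕ} (k : Fin n → ℤ) (x y : Fin n → AddCircle (1:ℝ)) :
    chi k (x + y) = chi k x * chi k y := by
  simp only [chi_apply, Pi.add_apply, ← Finset.prod_mul_distrib]
  exact Finset.prod_congr rfl fun i _ => fourier_add_x _ _ _

lemma norm_chi {n : ℕ} (k : Fin n → ℤ) (x : Fin n → AddCircle (1:ℝ)) :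
    ‖chi k x‖ = 1 := by
  simp only [chi_apply]
  rw [norm_prod]
  exact Finset.prod_eq_one fun i _ => Circle.norm_coe _

lemma chi_coe {n : ℕ} (k : Fin n → ℤ) (y : Fin n → ℝ) :
    chi k (fun i => (y i : AddCircle (1:ℝ)))
      = Complex.exp (2 * π * Complex.I * ∑ i, (k i : ℂ) * (y i : ℂ)) := by
  simp only [chi_apply, fourier_coe_apply]
  rw [← Complex.exp_sum]
  congr 1
  rw [Finset.mul_sum]
  refine Finset.sum_congr rfl fun i _ => ?_
  push_cast
  ring

/-- The natural projection `ℝⁿ → 𝕋ⁿ`. -/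
def qmap {n : ℕ} (y : Fin n → ℝ) : Fin n → AddCircle (1:ℝ) := fun i => (y i : AddCircle (1:ℝ))

lemma qmap_isOpenQuotientMap {n : ℕ} : IsOpenQuotientMap (qmap (n := n)) := by
  have : qmap (n := n) = Pi.map (fun (i : Fin n) (r : ℝ) => (r : AddCircle (1:ℝ))) := rfl
  rw [this]
  exact IsOpenQuotientMap.piMap fun i => QuotientAddGroup.isOpenQuotientMap_mk

lemma qmap_add {n : ℕ} (y z : Fin n → ℝ) : qmap (y + z) = qmap y + qmap z := rfl

lemma chi_sep {n : ℕ} {x y : Fin n → AddCircle (1:ℝ)} (hxy : x ≠ y) :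
    ∃ k : Fin n → ℤ, chi k x ≠ chi k y := by
  haveI : Fact ((0:ℝ) < 1) := ⟨one_pos⟩
  obtain ⟨i, hi⟩ := Function.ne_iff.mp hxy
  refine ⟨Pi.single i 1, fun hc => hi ?_⟩
  have hx : ∀ z : Fin n → AddCircle (1:ℝ), chi (Pi.single i 1) z = fourier 1 (z i) := by
    intro z
    rw [chi_apply, Finset.prod_eq_single i
      (fun j _ hji => by simp [Pi.single_apply, hji]) (by simp)]
    simp
  rw [hx, hx] at hc
  have h2 : AddCircle.toCircle ((1:ℤ) • x i) = AddCircle.toCircle ((1:ℤ) • y i) := by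
    have := hc
    rw [fourier_apply, fourier_apply] at this
    exact Subtype.coe_injective this
  simpa using AddCircle.injective_toCircle (one_ne_zero) h2

lemma exists_lift {n : ℕ} (f : (Fin n → ℝ) → ℂ) (hf : Continuous f)
    (hper : ∀ (x : Fin n → ℝ) (m : Fin n → ℤ), f (x + fun i => (m i : ℝ)) = f x) :
    ∃ F : (Fin n → AddCircle (1:ℝ)) → ℂ, Continuous F ∧ ∀ y, F (qmap y) = f y := by
  haveI : Fact ((0:ℝ) < 1) := ⟨one_pos⟩
  set ρ : (Fin n → AddCircle (1:ℝ)) → Fin n → ℝ :=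
    fun x i => ((AddCircle.equivIco 1 0 (x i) : ℝ)) with hρ
  have hq : ∀ y, (f ∘ ρ) (qmap y) = f y := by
    intro y
    show f (ρ (qmap y)) = f y
    have : ρ (qmap y) = y + fun i => (((-⌊y i⌋ : ℤ) : ℝ)) := by
      funext i
      show ((AddCircle.equivIco 1 0 ((y i : AddCircle (1:ℝ))) : ℝ)) = _
      rw [AddCircle.coe_equivIco_mk_apply]
      rw [div_one, mul_one, ← Int.self_sub_floor]
      push_cast
      simp only [Pi.add_apply]
      ring
    rw [this, hper]
  refine ⟨f ∘ ρ, ?_, hq⟩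
  have hcomp : (f ∘ ρ) ∘ qmap = f := funext hq
  rw [qmap_isOpenQuotientMap.isQuotientMap.continuous_iff]
  show Continuous ((f ∘ ρ) ∘ qmap)
  rw [hcomp]
  exact hf

lemma exists_v {n : ℕ} (hn : 2 ≤ n) (k : Fin n → ℤ) :
    ∃ v : Fin n → ℤ, v ≠ 0 ∧ ∑ i, k i * v i = 0 := by
  have h0 : (0:ℕ) < n := by omega
  have h1 : (1:ℕ) < n := by omega
  by_cases hk : k = 0
  · refine ⟨Pi.single ⟨0, h0⟩ 1, ?_, by simp [hk]⟩
    intro hv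
    have := congrFun hv ⟨0, h0⟩
    simp at this
  · obtain ⟨i, hi⟩ := Function.ne_iff.mp hk
    obtain ⟨j, hj⟩ : ∃ j : Fin n, j ≠ i := by
      rcases eq_or_ne i ⟨0, h0⟩ with hh | hh
      · exact ⟨⟨1, h1⟩, by simp [hh, Fin.ext_iff]⟩
      · exact ⟨⟨0, h0⟩, fun hc => hh hc.symm⟩
    classical
    set w : Fin n → ℤ := fun m => (if m = i then k j else 0) - (if m = j then k i else 0) with hw
    refine ⟨w, ?_, ?_⟩
    · intro hv
      have hj0 := congrFun hv j
      simp [hw, hj] at hj0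
      exact hi hj0
    · have hterm : ∀ m, k m * w m
          = (if m = i then k m * k j else 0) - (if m = j then k m * k i else 0) := by
        intro m; simp [hw, mul_sub, mul_ite]
      rw [Finset.sum_congr rfl fun m _ => hterm m, Finset.sum_sub_distrib]
      rw [Finset.sum_ite_eq' Finset.univ i (fun m => k m * k j),
        Finset.sum_ite_eq' Finset.univ j (fun m => k m * k i)]
      simp [mul_comm]

end

end XrayAux

open XrayAux in
/-- Injectivity of the X-ray transform on continuous functions on `𝕋ⁿ`, `n ≥ 2`. -/
theorem xray_injective (n : ℕ) (hn : 2 ≤ n) (f : (Fin n → ℝ) → ℂ)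
    (hf : Continuous f)
    (hper : ∀ (x : Fin n → ℝ) (m : Fin n → ℤ), f (x + fun i => (m i : ℝ)) = f x)
    (h : ∀ (x : Fin n → ℝ) (v : Fin n → ℤ), v ≠ 0 →
      (∫ t in (0:ℝ)..1, f (x + t • fun i => (v i : ℝ))) = 0) :
    f = 0 := by
  haveI : Fact ((0:ℝ) < 1) := ⟨one_pos⟩
  classical
  obtain ⟨F, hFc, hFq⟩ := exists_lift f hf hper
  set μ : Measure (Fin n → AddCircle (1:ℝ)) := volume with hμdef
  -- continuous functions are integrable
  have integC : ∀ g : (Fin n → AddCircle (1:ℝ)) → ℂ, Continuous g → Integrable g μ := by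
    intro g hg
    exact hg.integrable_of_hasCompactSupport ((isClosed_tsupport g).isCompact)
  have integR : ∀ g : (Fin n → AddCircle (1:ℝ)) → ℝ, Continuous g → Integrable g μ := by
    intro g hg
    exact hg.integrable_of_hasCompactSupport ((isClosed_tsupport g).isCompact)
  -- all Fourier coefficients of F vanish
  have key : ∀ k : Fin n → ℤ, ∫ x, F x * chi k x ∂μ = 0 := by
    intro k
    obtain ⟨v, hv, hkv⟩ := exists_v hn k
    set v' : Fin n → ℝ := fun i => (v i : ℝ) with hv'
    set a : ℝ → Fin n → AddCircle (1:ℝ) := fun t => qmap (t • v') with ha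
    have hchia : ∀ t : ℝ, chi k (a t) = 1 := by
      intro t
      have h1 : a t = fun i => (((t • v') i : ℝ) : AddCircle (1:ℝ)) := rfl
      rw [h1, chi_coe]
      have h2 : ∑ i, (k i : ℂ) * (((t • v') i : ℝ) : ℂ) = 0 := by
        have : ∑ i, (k i : ℂ) * (((t • v') i : ℝ) : ℂ)
            = (t : ℂ) * ((∑ i, k i * v i : ℤ) : ℂ) := by
          simp only [Pi.smul_apply, smul_eq_mul, hv']
          push_cast
          rw [Finset.mul_sum]
          exact Finset.sum_congr rfl fun i _ => by ring
        rw [this, hkv]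
        simp
      rw [h2, mul_zero, Complex.exp_zero]
    have step1 : ∀ t : ℝ, ∫ x, F (x + a t) * chi k x ∂μ = ∫ x, F x * chi k x ∂μ := by
      intro t
      have h3 := integral_add_right_eq_self (μ := μ) (fun x => F x * chi k x) (a t)
      rw [← h3]
      refine integral_congr_ae (Filter.Eventually.of_forall fun x => ?_)
      show F (x + a t) * chi k x = F (x + a t) * chi k (x + a t)
      rw [chi_add_x, hchia, mul_one]
    have step2 : ∀ x : Fin n → AddCircle (1:ℝ), (∫ t in (0:ℝ)..1, F (x + a t)) = 0 := by
      intro x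
      obtain ⟨y, rfl⟩ := qmap_isOpenQuotientMap.surjective x
      calc (∫ t in (0:ℝ)..1, F (qmap y + a t))
          = ∫ t in (0:ℝ)..1, f (y + t • v') := by
            refine intervalIntegral.integral_congr fun t _ => ?_
            rw [ha]
            show F (qmap y + qmap (t • v')) = _
            rw [← qmap_add, hFq]
        _ = 0 := h y v hv
    -- Fubini
    haveI hfin : IsFiniteMeasure (volume.restrict (Set.Ioc (0:ℝ) 1)) := by
      constructor
      rw [Measure.restrict_apply_univ]
      simp
    obtain ⟨C, hC⟩ := (isCompact_range hFc.norm).bddAbove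
    have hG2c : Continuous fun p : ℝ × (Fin n → AddCircle (1:ℝ)) =>
        F (p.2 + a p.1) * chi k p.2 := by
      refine Continuous.mul ?_ ((chi k).continuous.comp continuous_snd)
      refine hFc.comp (continuous_snd.add ?_)
      exact qmap_isOpenQuotientMap.continuous.comp (continuous_fst.smul continuous_const)
    have hint : Integrable (Function.uncurry fun t x => F (x + a t) * chi k x)
        ((volume.restrict (Set.Ioc (0:ℝ) 1)).prod μ) := by
      refine Integrable.mono' (integrable_const C) hG2c.aestronglyMeasurable
        (Filter.Eventually.of_forall fun p => ?_)
      rw [Function.uncurry]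
      simp only [norm_mul, norm_chi, mul_one]
      exact hC ⟨_, rfl⟩
    have hswap := MeasureTheory.integral_integral_swap
      (f := fun t (x : Fin n → AddCircle (1:ℝ)) => F (x + a t) * chi k x) hint
    have lhs : (∫ t in Set.Ioc (0:ℝ) 1, ∫ x, F (x + a t) * chi k x ∂μ)
        = ∫ x, F x * chi k x ∂μ := by
      rw [setIntegral_congr_fun measurableSet_Ioc (fun t _ => step1 t)]
      rw [setIntegral_const]
      simp
    have hinner : ∀ x : Fin n → AddCircle (1:ℝ),
        (∫ t in Set.Ioc (0:ℝ) 1, F (x + a t) * chi k x) = 0 := by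
      intro x
      rw [← intervalIntegral.integral_of_le zero_le_one,
        intervalIntegral.integral_mul_const, step2, zero_mul]
    have final : ∫ x, F x * chi k x ∂μ
        = ∫ x, (∫ t in Set.Ioc (0:ℝ) 1, F (x + a t) * chi k x) ∂μ := by
      rw [← lhs, hswap]
    rw [final]
    simp only [hinner]
    exact integral_zero _ _
  -- Stone–Weierstrass
  set G : Set C(Fin n → AddCircle (1:ℝ), ℂ) := Set.range (chi (n := n)) with hG
  have hstarG : G ∪ star G = G := by
    apply Set.union_eq_self_of_subset_right
    intro g hg
    rw [Set.mem_star] at hg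
    obtain ⟨k, hk⟩ := hg
    exact ⟨-k, by rw [← chi_star, hk, star_star]⟩
  set S : StarSubalgebra ℂ C(Fin n → AddCircle (1:ℝ), ℂ) := StarAlgebra.adjoin ℂ G with hS
  set M : Submonoid C(Fin n → AddCircle (1:ℝ), ℂ) :=
    { carrier := G
      one_mem' := ⟨0, chi_zero⟩
      mul_mem' := by
        intro a b ha hb
        obtain ⟨k, rfl⟩ := ha
        obtain ⟨l, rfl⟩ := hb
        exact ⟨k + l, (chi_mul k l).symm⟩ } with hM
  have hvanish : ∀ g ∈ S, ∫ x, F x * g x ∂μ = 0 := by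
    intro g hg
    have h1 : g ∈ Algebra.adjoin ℂ (G ∪ star G) := by
      rw [hS] at hg
      exact hg
    rw [hstarG] at h1
    have h2 : g ∈ Submodule.span ℂ G := by
      have h3 := (Subalgebra.mem_toSubmodule _).mpr h1
      rw [Algebra.adjoin_eq_span] at h3
      have h4 : Submonoid.closure G = M := Submonoid.closure_eq M
      rw [h4] at h3
      exact h3
    refine Submodule.span_induction ?_ ?_ ?_ ?_ h2
    · rintro g ⟨k, rfl⟩
      exact key k
    · simp
    · intro g1 g2 hg1 hg2 hp1 hp2
      simp only [ContinuousMap.add_apply, mul_add]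
      rw [integral_add (f := fun x => F x * g1 x) (g := fun x => F x * g2 x) (integC _ (hFc.mul g1.continuous)) (integC _ (hFc.mul g2.continuous)),
        hp1, hp2, add_zero]
    · intro c g hgmem hp
      simp only [ContinuousMap.coe_smul, Pi.smul_apply, smul_eq_mul]
      rw [show (fun x => F x * (c * g x)) = fun x => c * (F x * g x) from
        funext fun x => by ring, MeasureTheory.integral_const_mul, hp, mul_zero]
  have hsep : S.SeparatesPoints := by
    intro x y hxy
    obtain ⟨k, hk⟩ := chi_sep hxy
    exact ⟨_, ⟨chi k, StarAlgebra.subset_adjoin ℂ G ⟨k, rfl⟩, rfl⟩, hk⟩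
  have htop := ContinuousMap.starSubalgebra_topologicalClosure_eq_top_of_separatesPoints S hsep
  set B : ℝ := ∫ x, ‖F x‖ ∂μ with hB
  have hB0 : 0 ≤ B := integral_nonneg fun x => norm_nonneg _
  have hLlip : LipschitzWith B.toNNReal
      (fun g : C(Fin n → AddCircle (1:ℝ), ℂ) => ∫ x, F x * g x ∂μ) := by
    refine LipschitzWith.of_dist_le_mul fun g g' => ?_
    rw [dist_eq_norm, Real.coe_toNNReal _ hB0]
    have hsub : (∫ x, F x * g x ∂μ) - (∫ x, F x * g' x ∂μ) = ∫ x, F x * (g x - g' x) ∂μ := by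
      rw [← integral_sub (f := fun x => F x * g x) (g := fun x => F x * g' x) (integC _ (hFc.mul g.continuous)) (integC _ (hFc.mul g'.continuous))]
      simp only [mul_sub]
    rw [hsub]
    calc ‖∫ x, F x * (g x - g' x) ∂μ‖
        ≤ ∫ x, ‖F x * (g x - g' x)‖ ∂μ := norm_integral_le_integral_norm _
      _ ≤ ∫ x, ‖F x‖ * dist g g' ∂μ := by
          refine integral_mono ((integC _ (hFc.mul (g.continuous.sub g'.continuous))).norm)
            ((integR _ hFc.norm).mul_const _) fun x => ?_
          rw [norm_mul]
          refine mul_le_mul_of_nonneg_left ?_ (norm_nonneg _)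
          rw [← dist_eq_norm]
          exact ContinuousMap.dist_apply_le_dist x
      _ = B * dist g g' := by rw [MeasureTheory.integral_mul_const]
  have hclosed : IsClosed {g : C(Fin n → AddCircle (1:ℝ), ℂ) | ∫ x, F x * g x ∂μ = 0} :=
    isClosed_eq hLlip.continuous continuous_const
  set Fc : C(Fin n → AddCircle (1:ℝ), ℂ) := ⟨F, hFc⟩ with hFcdef
  have hmem : (star Fc) ∈ closure (S : Set C(Fin n → AddCircle (1:ℝ), ℂ)) := by
    rw [← StarSubalgebra.topologicalClosure_coe, htop]
    trivial
  have hz : ∫ x, F x * (star Fc) x ∂μ = 0 :=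
    closure_minimal (fun g hg => hvanish g hg) hclosed hmem
  have hre : ∫ x, (RCLike.ofReal (K := ℂ) (Complex.normSq (F x))) ∂μ = 0 := by
    rw [← hz]
    refine integral_congr_ae (Filter.Eventually.of_forall fun x => ?_)
    show (RCLike.ofReal (K := ℂ) (Complex.normSq (F x))) = F x * (star Fc) x
    rw [ContinuousMap.star_apply]
    exact (Complex.mul_conj (F x)).symm
  rw [integral_ofReal] at hre
  have hre' : ∫ x, Complex.normSq (F x) ∂μ = 0 := by
    exact (RCLike.ofReal_eq_zero (K := ℂ)).mp hre
  have hns : (fun x => Complex.normSq (F x)) =ᵐ[μ] 0 :=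
    (integral_eq_zero_iff_of_nonneg (fun x => Complex.normSq_nonneg _)
      (integR _ (Complex.continuous_normSq.comp hFc))).mp hre'
  have hzero : (fun x => Complex.normSq (F x)) = 0 :=
    (Continuous.ae_eq_iff_eq (μ := μ) (Complex.continuous_normSq.comp hFc)
      continuous_const).mp hns
  funext y
  have h5 : Complex.normSq (F (qmap y)) = 0 := congrFun hzero (qmap y)
  have h6 : F (qmap y) = 0 := Complex.normSq_eq_zero.mp h5
  rw [Pi.zero_apply, ← hFq y, h6]
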